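/- Let A be a maximal monotone operator on a real Hilbert space H whose solution set S = {x : (x, 0) ∈ A} is nonempty (S is closed and convex). Let u : [0, ∞) → H be a solution of the differential inclusion u̇ ∈ −Au, and let v : [0, ∞) → H satisfy, for every t ≥ 0, v(t) ∈ S and ‖u(t) − v(t)‖ ≤ ‖u(t) − w‖ for all w ∈ S (i.e., v(t) is the nearest-point projection of u(t) onto S). Then v(t) converges strongly to some point of S as t → ∞. -/

import Mathlib

open RealInnerProductSpace Filter Topology MeasureTheory Set

section auxlemmas
open MeasureTheory Set Filter Topology


lemma key_mono {f : ℝ → ℝ} {a b K : ℝ} (hab : a ≤ b) (hK : 0 ≤ K)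
    (hlip : ∀ x ∈ Icc a b, ∀ y ∈ Icc a b, |f y - f x| ≤ K * |y - x|)
    {N : Set ℝ} (hN : volume N = 0)
    (hder : ∀ t ∈ Ioo a b, t ∉ N → ∃ f', HasDerivAt f f' t ∧ f' ≤ 0) :
    f b ≤ f a := by
  have hcont : ContinuousOn f (Icc a b) := by
    have : LipschitzOnWith (Real.toNNReal K) f (Icc a b) := by
      rw [lipschitzOnWith_iff_dist_le_mul]
      intro x hx y hy
      rw [Real.dist_eq, Real.dist_eq, Real.coe_toNNReal K hK]
      simpa [abs_sub_comm] using hlip y hy x hx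
    exact this.continuousOn
  -- reduce to an ε-statement
  have main : ∀ ε : ℝ, 0 < ε → f b - f a ≤ (K + (b - a)) * ε := by
    intro ε εpos
    -- choose open U ⊇ N ∪ {a} of small measure
    have hNa : volume (N ∪ {a}) < ENNReal.ofReal ε := by
      rw [measure_union_null hN (measure_singleton a)]
      exact ENNReal.ofReal_pos.2 εpos
    obtain ⟨U, hUN, hUopen, hUvol⟩ := Set.exists_isOpen_lt_of_lt _ _ hNa
    have hUlt : volume U < ⊤ := hUvol.trans ENNReal.ofReal_lt_top
    have hfin : ∀ s t : ℝ, volume (U ∩ Ioc s t) ≠ ⊤ :=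
      fun s t => ((measure_mono inter_subset_left).trans_lt hUlt).ne
    set M : ℝ → ℝ := fun t => (volume (U ∩ Ioc a t)).toReal with hM
    have hMadd : ∀ s t : ℝ, a ≤ s → s ≤ t →
        M t = M s + (volume (U ∩ Ioc s t)).toReal := by
      intro s t has hst
      have hsplit : U ∩ Ioc a t = (U ∩ Ioc a s) ∪ (U ∩ Ioc s t) := by
        rw [← inter_union_distrib_left, Ioc_union_Ioc_eq_Ioc has hst]
      have hdisj : Disjoint (U ∩ Ioc a s) (U ∩ Ioc s t) :=
        (Set.Ioc_disjoint_Ioc_of_le le_rfl).mono inf_le_right inf_le_right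
      rw [hM]
      simp only
      rw [hsplit, measure_union hdisj (hUopen.measurableSet.inter measurableSet_Ioc),
        ENNReal.toReal_add (hfin a s) (hfin s t)]
    have hMnn : ∀ s t : ℝ, (0:ℝ) ≤ (volume (U ∩ Ioc s t)).toReal :=
      fun s t => ENNReal.toReal_nonneg
    have hMmono : ∀ s t : ℝ, a ≤ s → s ≤ t → M s ≤ M t := by
      intro s t has hst
      rw [hMadd s t has hst]
      linarith [hMnn s t]
    have hMle : ∀ s t : ℝ, s ≤ t → (volume (U ∩ Ioc s t)).toReal ≤ t - s := by
      intro s t hst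
      have h1 : volume (U ∩ Ioc s t) ≤ volume (Ioc s t) := measure_mono inter_subset_right
      rw [Real.volume_Ioc] at h1
      calc (volume (U ∩ Ioc s t)).toReal ≤ (ENNReal.ofReal (t - s)).toReal :=
            ENNReal.toReal_mono ENNReal.ofReal_ne_top h1
        _ = t - s := ENNReal.toReal_ofReal (by linarith)
    have hMcont : ContinuousOn M (Icc a b) := by
      have : LipschitzOnWith 1 M (Icc a b) := by
        rw [lipschitzOnWith_iff_dist_le_mul]
        intro x hx y hy
        rcases le_total x y with h | h
        · rw [Real.dist_eq, Real.dist_eq, abs_of_nonpos (by linarith [hMmono x y hx.1 h] : M x - M y ≤ 0),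
            abs_of_nonpos (by linarith), hMadd x y hx.1 h]
          push_cast
          linarith [hMle x y h]
        · rw [Real.dist_eq, Real.dist_eq, abs_of_nonneg (by linarith [hMmono y x hy.1 h] : 0 ≤ M x - M y),
            abs_of_nonneg (by linarith), hMadd y x hy.1 h]
          push_cast
          linarith [hMle y x h]
      exact this.continuousOn
    have hMa : M a = 0 := by simp [hM]
    have hMb : M b ≤ ε := by
      have : volume (U ∩ Ioc a b) ≤ ENNReal.ofReal ε :=
        ((measure_mono inter_subset_left).trans hUvol.le)
      exact ENNReal.toReal_le_of_le_ofReal εpos.le this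
    have hIU : ∀ s t : ℝ, a ≤ s → s ≤ t → Ioc s t ⊆ U → t - s ≤ M t - M s := by
      intro s t has hst hsub
      rw [hMadd s t has hst, inter_eq_self_of_subset_right hsub, Real.volume_Ioc,
        ENNReal.toReal_ofReal (by linarith)]
      linarith
    set s0 : Set ℝ := {t | f t - f a ≤ K * M t + ε * (t - a)} with hs0
    have hclosed : IsClosed (s0 ∩ Icc a b) := by
      have hg : ContinuousOn (fun t => f t - f a - (K * M t + ε * (t - a))) (Icc a b) :=
        (hcont.sub continuousOn_const).sub
          (((continuousOn_const.mul hMcont)).add (continuousOn_const.mul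
            ((continuousOn_id.sub continuousOn_const))))
      have : s0 ∩ Icc a b =
          Icc a b ∩ (fun t => f t - f a - (K * M t + ε * (t - a))) ⁻¹' (Iic 0) := by
        ext t
        simp only [hs0, mem_inter_iff, mem_setOf_eq, mem_preimage, mem_Iic, and_comm]
        constructor
        · rintro ⟨h1, h2⟩; exact ⟨h1, by linarith⟩
        · rintro ⟨h1, h2⟩; exact ⟨h1, by linarith⟩
      rw [this]
      exact hg.preimage_isClosed_of_isClosed isClosed_Icc isClosed_Iic
    have hmem_a : a ∈ s0 := by simp [hs0, hMa]
    have hstep : ∀ x ∈ s0 ∩ Ico a b, ∀ y ∈ Ioi x, (s0 ∩ Ioc x y).Nonempty := by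
      rintro x ⟨hxs, hxI⟩ y hy
      rw [mem_Ioi] at hy
      have hxs' : f x - f a ≤ K * M x + ε * (x - a) := hxs
      by_cases hxU : x ∈ U
      · -- Lipschitz case inside U
        obtain ⟨δ, δpos, hball⟩ := Metric.isOpen_iff.1 hUopen x hxU
        set w := min (min y b) (x + δ / 2) with hw
        have hxw : x < w := lt_min (lt_min hy hxI.2) (by linarith)
        have hwy : w ≤ y := le_trans (min_le_left _ _) (min_le_left _ _)
        have hwb : w ≤ b := le_trans (min_le_left _ _) (min_le_right _ _)
        have hwδ : w ≤ x + δ / 2 := min_le_right _ _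
        have hsub : Ioc x w ⊆ U := by
          intro z hz
          apply hball
          rw [Metric.mem_ball, Real.dist_eq, abs_of_pos (by linarith [hz.1] : (0:ℝ) < z - x)]
          linarith [hz.2]
        have hMxw : w - x ≤ M w - M x := hIU x w hxI.1 hxw.le hsub
        have hfxw : f w - f x ≤ K * (w - x) := by
          have := hlip x ⟨hxI.1, hxI.2.le⟩ w ⟨by linarith [hxI.1], hwb⟩
          calc f w - f x ≤ |f w - f x| := le_abs_self _
            _ ≤ K * |w - x| := this
            _ = K * (w - x) := by rw [abs_of_pos (by linarith)]
        refine ⟨w, ?_, hxw, hwy⟩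
        show f w - f a ≤ K * M w + ε * (w - a)
        nlinarith [hMxw, hfxw, hxs']
      · -- derivative case
        have hxN : x ∉ N := fun h => hxU (hUN (Or.inl h))
        have hxa : x ≠ a := fun h => hxU (hUN (Or.inr (by simp [h])))
        obtain ⟨f', hf', hf'0⟩ := hder x ⟨lt_of_le_of_ne hxI.1 (Ne.symm hxa), hxI.2⟩ hxN
        have hslope : Tendsto (slope f x) (𝓝[>] x) (𝓝 f') := by
          have h1 := (hf'.hasDerivWithinAt (s := Ioi x))
          rw [hasDerivWithinAt_iff_tendsto_slope] at h1
          rwa [Set.diff_singleton_eq_self (by simp)] at h1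
        have hev : ∀ᶠ w in 𝓝[>] x, slope f x w < ε :=
          hslope.eventually (Filter.Tendsto.eventually_lt_const (by linarith) tendsto_id)
        have hmem : Ioc x (min y b) ∈ 𝓝[>] x :=
          Ioc_mem_nhdsGT_of_mem ⟨le_refl x, lt_min hy hxI.2⟩
        obtain ⟨w, hw1, hw2⟩ := (hev.and (eventually_of_mem hmem (fun z hz => hz))).exists
        have hxw : x < w := hw2.1
        have hwyb : w ≤ min y b := hw2.2
        have hfxw : f w - f x ≤ ε * (w - x) := by
          have := hw1
          rw [slope_def_field] at this
          have h2 : (f w - f x) / (w - x) < ε := this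
          have h3 := (div_lt_iff₀ (by linarith : (0:ℝ) < w - x)).1 h2
          linarith
        refine ⟨w, ?_, hxw, le_trans hwyb (min_le_left _ _)⟩
        show f w - f a ≤ K * M w + ε * (w - a)
        have hMx : M x ≤ M w := hMmono x w hxI.1 hxw.le
        nlinarith [hfxw, hxs']
    have := IsClosed.Icc_subset_of_forall_exists_gt hclosed hmem_a hstep
    have hb : f b - f a ≤ K * M b + ε * (b - a) := this ⟨hab, le_refl b⟩
    nlinarith [hMb]
  -- conclude
  have h0 : f b - f a ≤ 0 := by
    by_contra h
    push_neg at h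
    set C := K + (b - a) with hC
    have hCpos : 0 < C + 1 := by nlinarith
    have := main ((f b - f a) / (2 * (C + 1))) (by positivity)
    have hle : C / (2 * (C+1)) ≤ 1/2 := by
      rw [div_le_div_iff₀ (by linarith) (by norm_num)]
      nlinarith
    have h2 : C * ((f b - f a) / (2 * (C + 1))) = C / (2 * (C + 1)) * (f b - f a) := by
      ring
    nlinarith [mul_le_mul_of_nonneg_right hle h.le]
  linarith


lemma compact_lip {H : Type*} [NormedAddCommGroup H]
    {u : ℝ → H} (hulip : LocallyLipschitzOn (Ici 0) u) {a b : ℝ} (ha : 0 ≤ a) :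
    ∃ K : ℝ, 0 ≤ K ∧ ∀ x ∈ Icc a b, ∀ y ∈ Icc a b, dist (u x) (u y) ≤ K * dist x y := by
  rcases le_or_gt b a with hba | hab
  · rcases eq_or_lt_of_le hba with rfl | hba'
    · exact ⟨0, le_rfl, fun x hx y hy => by
        have hx' : x = b := le_antisymm hx.2 hx.1
        have hy' : y = b := le_antisymm hy.2 hy.1
        simp [hx', hy']⟩
    · exact ⟨0, le_rfl, fun x hx y hy => absurd (hx.1.trans hx.2) (not_le.2 hba')⟩
  set T : Set ℝ := {t | t ∈ Icc a b ∧ ∃ K : ℝ, 0 ≤ K ∧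
    ∀ x ∈ Icc a t, ∀ y ∈ Icc a t, dist (u x) (u y) ≤ K * dist x y} with hT
  have haT : a ∈ T := by
    refine ⟨⟨le_rfl, hab.le⟩, 0, le_rfl, fun x hx y hy => ?_⟩
    have hx' : x = a := le_antisymm hx.2 hx.1
    have hy' : y = a := le_antisymm hy.2 hy.1
    simp [hx', hy']
  have hbdd : BddAbove T := ⟨b, fun t ht => ht.1.2⟩
  set c := sSup T with hc
  have hac : a ≤ c := le_csSup hbdd haT
  have hcb : c ≤ b := csSup_le ⟨a, haT⟩ (fun t ht => ht.1.2)
  obtain ⟨K₀, t0, ht0mem, ht0lip⟩ := hulip (show c ∈ Ici (0:ℝ) by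
    simp only [mem_Ici]; linarith)
  obtain ⟨δ, δpos, hball⟩ := Metric.mem_nhdsWithin_iff.1 ht0mem
  have hdist0 : ∀ x ∈ t0, ∀ y ∈ t0, dist (u x) (u y) ≤ (K₀:ℝ) * dist x y :=
    lipschitzOnWith_iff_dist_le_mul.1 ht0lip
  have hJ : ∀ z : ℝ, max a (c - δ/2) ≤ z → z ≤ min b (c + δ/2) → z ∈ t0 := by
    intro z h1 h2
    have h1a : a ≤ z := le_trans (le_max_left _ _) h1
    have h1c : c - δ/2 ≤ z := le_trans (le_max_right _ _) h1
    have h2c : z ≤ c + δ/2 := le_trans h2 (min_le_right _ _)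
    apply hball
    refine ⟨?_, by simp only [mem_Ici]; linarith⟩
    rw [Metric.mem_ball, Real.dist_eq, abs_lt]
    constructor <;> linarith
  obtain ⟨t', ht'T, ht'gt⟩ := exists_lt_of_lt_csSup ⟨a, haT⟩
    (show c - δ/2 < c by linarith)
  have ht'c : t' ≤ c := le_csSup hbdd ht'T
  obtain ⟨ht'I, K₁, hK₁0, hlip₁⟩ := ht'T
  set m := min b (c + δ/2) with hm
  have ham : a ≤ m := le_min hab.le (by linarith)
  have ht'm : t' ≤ m := le_min ht'I.2 (by linarith)
  have main2 : ∀ x ∈ Icc a m, ∀ y ∈ Icc a m, x ≤ y →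
      dist (u x) (u y) ≤ ((K₀:ℝ) + K₁) * dist x y := by
    intro x hx y hy hxy
    have hdnn : (0:ℝ) ≤ dist x y := dist_nonneg
    rcases le_total y t' with h1 | h1
    · calc dist (u x) (u y) ≤ K₁ * dist x y :=
            hlip₁ x ⟨hx.1, hxy.trans h1⟩ y ⟨hy.1, h1⟩
        _ ≤ ((K₀:ℝ) + K₁) * dist x y := by nlinarith [K₀.coe_nonneg]
    · rcases le_total t' x with h2 | h2
      · have hxt0 : x ∈ t0 := hJ x (max_le_iff.2 ⟨hx.1, by linarith⟩) (hx.2)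
        have hyt0 : y ∈ t0 := hJ y (max_le_iff.2 ⟨hy.1, by linarith⟩) (hy.2)
        calc dist (u x) (u y) ≤ (K₀:ℝ) * dist x y := hdist0 x hxt0 y hyt0
          _ ≤ ((K₀:ℝ) + K₁) * dist x y := by nlinarith
      · -- x ≤ t' ≤ y
        have ht't0 : t' ∈ t0 := hJ t' (max_le_iff.2 ⟨ht'I.1, by linarith⟩) ht'm
        have hyt0 : y ∈ t0 := hJ y (max_le_iff.2 ⟨hy.1, by linarith⟩) hy.2
        have d1 : dist (u x) (u t') ≤ K₁ * (t' - x) := by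
          have := hlip₁ x ⟨hx.1, h2⟩ t' ⟨ht'I.1, le_rfl⟩
          rwa [Real.dist_eq, abs_of_nonpos (by linarith), neg_sub] at this
        have d2 : dist (u t') (u y) ≤ (K₀:ℝ) * (y - t') := by
          have := hdist0 t' ht't0 y hyt0
          rwa [Real.dist_eq, abs_of_nonpos (by linarith), neg_sub] at this
        have dd : dist x y = y - x := by
          rw [Real.dist_eq, abs_of_nonpos (by linarith), neg_sub]
        calc dist (u x) (u y) ≤ dist (u x) (u t') + dist (u t') (u y) :=
              dist_triangle _ _ _
          _ ≤ ((K₀:ℝ) + K₁) * dist x y := by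
              rw [dd]
              nlinarith [K₀.coe_nonneg, mul_le_mul_of_nonneg_left (show t' - x ≤ y - x by linarith) hK₁0,
                mul_le_mul_of_nonneg_left (show y - t' ≤ y - x by linarith) K₀.coe_nonneg]
  have hmT : m ∈ T := by
    refine ⟨⟨ham, min_le_left _ _⟩, (K₀:ℝ) + K₁, by positivity, fun x hx y hy => ?_⟩
    rcases le_total x y with h | h
    · exact main2 x hx y hy h
    · rw [dist_comm (u x), dist_comm x]
      exact main2 y hy x hx h
  have hmc : m ≤ c := le_csSup hbdd hmT
  have hbc : b ≤ c := by
    by_contra hcon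
    push_neg at hcon
    have : c < m := lt_min hcon (by linarith)
    linarith
  have hcb' : c = b := le_antisymm hcb hbc
  have hmb : m = b := by
    rw [hm, hcb']
    exact min_eq_left (by linarith)
  rw [hmb] at hmT
  obtain ⟨-, K, hK0, hK⟩ := hmT
  exact ⟨K, hK0, hK⟩

end auxlemmas

/-- An operator (identified with its graph) is monotone. -/
def MonotoneOp {H : Type*} [NormedAddCommGroup H] [InnerProductSpace ℝ H]
    (A : Set (H × H)) : Prop :=
  ∀ p ∈ A, ∀ q ∈ A, (0:ℝ) ≤ ⟪p.2 - q.2, p.1 - q.1⟫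

/-- An operator is maximal monotone: monotone and with no proper monotone extension. -/
def MaximalMonotone {H : Type*} [NormedAddCommGroup H] [InnerProductSpace ℝ H]
    (A : Set (H × H)) : Prop :=
  MonotoneOp A ∧ ∀ B : Set (H × H), MonotoneOp B → A ⊆ B → B = A

theorem stmt15 {H : Type*} [NormedAddCommGroup H] [InnerProductSpace ℝ H] [CompleteSpace H]
    (A : Set (H × H)) (hA : A.Nonempty) (hmax : MaximalMonotone A)
    (hS : {z : H | (z, 0) ∈ A}.Nonempty)
    (u : ℝ → H) (hulip : LocallyLipschitzOn (Ici 0) u)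
    (hu : ∀ᵐ t ∂(volume.restrict (Ioi (0:ℝ))),
      ∃ d : H, HasDerivAt u d t ∧ (u t, -d) ∈ A)
    (v : ℝ → H)
    (hv : ∀ t : ℝ, 0 ≤ t → v t ∈ {z : H | (z, 0) ∈ A} ∧
      ∀ w ∈ {z : H | (z, 0) ∈ A}, ‖u t - v t‖ ≤ ‖u t - w‖) :
    ∃ p ∈ {z : H | (z, 0) ∈ A}, Tendsto v atTop (𝓝 p) := by
  set S : Set H := {z : H | (z, 0) ∈ A} with hSdef
  -- characterization of S via maximality
  have hchar : ∀ x : H, (x, 0) ∈ A ↔ ∀ q ∈ A, (0:ℝ) ≤ ⟪q.2, q.1 - x⟫ := by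
    intro x
    constructor
    · intro hx q hq
      have := hmax.1 q hq (x, 0) hx
      simpa using this
    · intro hx
      have hmono : MonotoneOp (A ∪ {(x, 0)}) := by
        rintro p hp q hq
        rcases hp with hp | hp <;> rcases hq with hq | hq
        · exact hmax.1 p hp q hq
        · simp only [mem_singleton_iff] at hq
          rw [hq]
          simpa using hx p hp
        · simp only [mem_singleton_iff] at hp
          rw [hp]
          have h1 : ((x, 0) : H × H).2 - q.2 = -q.2 := by simp
          have h2 : ((x, 0) : H × H).1 - q.1 = -(q.1 - x) := by simp [neg_sub]
          rw [h1, h2, inner_neg_neg]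
          exact hx q hq
        · simp only [mem_singleton_iff] at hp hq
          rw [hp, hq]
          simp
      have hBA := hmax.2 _ hmono subset_union_left
      rw [← hBA]
      exact Or.inr rfl
  -- segment property (convexity of S)
  have hseg : ∀ vx ∈ S, ∀ w ∈ S, ∀ θ : ℝ, 0 ≤ θ → θ ≤ 1 → vx + θ • (w - vx) ∈ S := by
    intro vx hvx w hw θ hθ0 hθ1
    rw [hSdef, mem_setOf_eq, hchar]
    intro q hq
    have hcomb : q.1 - (vx + θ • (w - vx)) = (1 - θ) • (q.1 - vx) + θ • (q.1 - w) := by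
      module
    rw [hcomb, inner_add_right, real_inner_smul_right, real_inner_smul_right]
    have h1 := (hchar vx).1 hvx q hq
    have h2 := (hchar w).1 hw q hq
    nlinarith
  -- projection inequality
  have hproj : ∀ (x vx w : H), vx ∈ S → w ∈ S → (∀ w' ∈ S, ‖x - vx‖ ≤ ‖x - w'‖) →
      ‖x - vx‖ ^ 2 + ‖vx - w‖ ^ 2 ≤ ‖x - w‖ ^ 2 := by
    intro x vx w hvx hw hmin
    have hinner : ⟪x - vx, w - vx⟫ ≤ 0 := by
      by_contra hcon
      push_neg at hcon
      set c : ℝ := ⟪x - vx, w - vx⟫ with hc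
      have hwvx : w - vx ≠ 0 := by
        intro h
        rw [hc, h, inner_zero_right] at hcon
        exact lt_irrefl _ hcon
      have hnw : (0:ℝ) < ‖w - vx‖ ^ 2 := pow_pos (norm_pos_iff.mpr hwvx) 2
      set θ := min 1 (c / ‖w - vx‖ ^ 2) with hθ
      have hθpos : 0 < θ := lt_min one_pos (div_pos hcon hnw)
      have hθ1 : θ ≤ 1 := min_le_left _ _
      have hθc : θ * ‖w - vx‖ ^ 2 ≤ c := by
        have := min_le_right 1 (c / ‖w - vx‖ ^ 2)
        calc θ * ‖w - vx‖ ^ 2 ≤ (c / ‖w - vx‖ ^ 2) * ‖w - vx‖ ^ 2 :=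
              mul_le_mul_of_nonneg_right this hnw.le
          _ = c := div_mul_cancel₀ c hnw.ne'
      have hzS : vx + θ • (w - vx) ∈ S := hseg vx hvx w hw θ hθpos.le hθ1
      have hle : ‖x - vx‖ ≤ ‖x - (vx + θ • (w - vx))‖ := hmin _ hzS
      have hle2 : ‖x - vx‖ ^ 2 ≤ ‖x - (vx + θ • (w - vx))‖ ^ 2 :=
        pow_le_pow_left₀ (norm_nonneg _) hle 2
      have hexp : ‖x - (vx + θ • (w - vx))‖ ^ 2
          = ‖x - vx‖ ^ 2 - 2 * (θ * c) + θ ^ 2 * ‖w - vx‖ ^ 2 := by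
        have e1 : x - (vx + θ • (w - vx)) = (x - vx) - θ • (w - vx) := by abel
        rw [e1, norm_sub_sq_real, real_inner_smul_right, norm_smul]
        rw [Real.norm_eq_abs, abs_of_pos hθpos, mul_pow]
      have h2θ : 2 * (θ * c) ≤ θ ^ 2 * ‖w - vx‖ ^ 2 := by linarith [hle2, hexp ▸ hle2]
      nlinarith [mul_le_mul_of_nonneg_left hθc hθpos.le]
    have e2 : x - w = (x - vx) - (w - vx) := by abel
    have := norm_sub_sq_real (x - vx) (w - vx)
    rw [← e2] at this
    rw [norm_sub_rev vx w]
    linarith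
  -- measure-zero bad set for the derivative
  have huae := ae_imp_of_ae_restrict hu
  set N : Set ℝ := {t : ℝ | ¬ (t ∈ Ioi (0:ℝ) → ∃ d : H, HasDerivAt u d t ∧ (u t, -d) ∈ A)}
    with hNdef
  have hNvol : volume N = 0 := huae
  -- decay of distances to points of S
  have hdec : ∀ z ∈ S, ∀ s t : ℝ, 0 ≤ s → s ≤ t → ‖u t - z‖ ^ 2 ≤ ‖u s - z‖ ^ 2 := by
    intro z hz s t hs hst
    obtain ⟨K, hK0, hKlip⟩ := compact_lip hulip (a := s) (b := t) hs
    set C : ℝ := ‖u s - z‖ + K * (t - s) with hC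
    have hC0 : 0 ≤ C := by
      have := norm_nonneg (u s - z)
      nlinarith
    have hbound : ∀ x ∈ Icc s t, ‖u x - z‖ ≤ C := by
      intro x hx
      have h1 : ‖u x - z‖ ≤ ‖u x - u s‖ + ‖u s - z‖ := by
        have := norm_add_le (u x - u s) (u s - z)
        simpa using this
      have h2 : ‖u x - u s‖ ≤ K * (x - s) := by
        have := hKlip x hx s ⟨le_rfl, hst⟩
        rwa [dist_eq_norm, Real.dist_eq, abs_of_nonneg (by linarith [hx.1])] at this
      have : K * (x - s) ≤ K * (t - s) := by
        apply mul_le_mul_of_nonneg_left _ hK0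
        linarith [hx.2]
      rw [hC]
      linarith
    set f : ℝ → ℝ := fun τ => ‖u τ - z‖ ^ 2 with hf
    have hlipf : ∀ x ∈ Icc s t, ∀ y ∈ Icc s t, |f y - f x| ≤ (2 * C * K) * |y - x| := by
      intro x hx y hy
      have e : f y - f x = (‖u y - z‖ - ‖u x - z‖) * (‖u y - z‖ + ‖u x - z‖) := by
        rw [hf]; ring
      have h1 : |‖u y - z‖ - ‖u x - z‖| ≤ ‖u y - u x‖ := by
        have := abs_norm_sub_norm_le (u y - z) (u x - z)
        have e2 : (u y - z) - (u x - z) = u y - u x := by abel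
        rwa [e2] at this
      have h2 : ‖u y - u x‖ ≤ K * |y - x| := by
        have := hKlip y hy x hx
        rwa [dist_eq_norm, Real.dist_eq] at this
      have h3 : ‖u y - z‖ + ‖u x - z‖ ≤ 2 * C := by
        linarith [hbound y hy, hbound x hx]
      rw [e, abs_mul, abs_of_nonneg (add_nonneg (norm_nonneg _) (norm_nonneg _))]
      calc |‖u y - z‖ - ‖u x - z‖| * (‖u y - z‖ + ‖u x - z‖)
          ≤ (K * |y - x|) * (2 * C) := by
            apply mul_le_mul (h1.trans h2) h3
              (add_nonneg (norm_nonneg _) (norm_nonneg _)) (by positivity)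
        _ = (2 * C * K) * |y - x| := by ring
    have hder : ∀ τ ∈ Ioo s t, τ ∉ N → ∃ f', HasDerivAt f f' τ ∧ f' ≤ 0 := by
      intro τ hτ hτN
      have hτ0 : τ ∈ Ioi (0:ℝ) := by
        simp only [mem_Ioi]
        linarith [hτ.1]
      rw [hNdef, mem_setOf_eq, not_not] at hτN
      obtain ⟨d, hd, hdA⟩ := hτN hτ0
      have hderiv := HasDerivAt.inner ℝ (hd.sub_const z) (hd.sub_const z)
      simp only [real_inner_self_eq_norm_sq] at hderiv
      refine ⟨⟪u τ - z, d⟫ + ⟪d, u τ - z⟫, hderiv, ?_⟩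
      have hmono := hmax.1 (u τ, -d) hdA (z, 0) hz
      simp only [sub_zero] at hmono
      have : (0:ℝ) ≤ ⟪-d, u τ - z⟫ := hmono
      rw [inner_neg_left] at this
      linarith [real_inner_comm (u τ - z) d]
    have := key_mono hst (by positivity) hlipf hNvol hder
    exact this
  -- ψ and its antitonicity
  set ψ : ℝ → ℝ := fun t => ‖u t - v t‖ ^ 2 with hψ
  have hψanti : ∀ s t : ℝ, 0 ≤ s → s ≤ t → ψ t ≤ ψ s := by
    intro s t hs hst
    have ht0 : 0 ≤ t := hs.trans hst
    have h1 : ‖u t - v t‖ ≤ ‖u t - v s‖ := (hv t ht0).2 (v s) (hv s hs).1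
    have h2 : ‖u t - v t‖ ^ 2 ≤ ‖u t - v s‖ ^ 2 := pow_le_pow_left₀ (norm_nonneg _) h1 2
    have h3 := hdec (v s) (hv s hs).1 s t hs hst
    simp only [hψ]
    linarith
  have hvdiff : ∀ s t : ℝ, 0 ≤ s → s ≤ t → ‖v t - v s‖ ^ 2 ≤ ψ s - ψ t := by
    intro s t hs hst
    have ht0 : 0 ≤ t := hs.trans hst
    have h1 := hproj (u t) (v t) (v s) (hv t ht0).1 (hv s hs).1 (hv t ht0).2
    have h2 := hdec (v s) (hv s hs).1 s t hs hst
    simp only [hψ]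
    linarith
  -- limit of ψ
  set g : ℝ → ℝ := fun t => ψ (max t 0) with hg
  have hganti : Antitone g := by
    intro s t hst
    exact hψanti (max s 0) (max t 0) (le_max_right _ _) (max_le_max hst le_rfl)
  have hgbdd : BddBelow (range g) := by
    refine ⟨0, ?_⟩
    rintro x ⟨t, rfl⟩
    simp only [hg, hψ]
    positivity
  have htend := tendsto_atTop_ciInf hganti hgbdd
  set L : ℝ := ⨅ t, g t with hL
  have hLle : ∀ t : ℝ, L ≤ g t := fun t => ciInf_le hgbdd t
  -- v is Cauchy
  have hvC : CauchySeq v := by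
    rw [Metric.cauchySeq_iff']
    intro ε εpos
    have hev : ∀ᶠ t in atTop, g t < L + ε ^ 2 / 2 :=
      htend.eventually (Filter.Tendsto.eventually_lt_const (show L < L + ε ^ 2 / 2 by nlinarith [pow_pos εpos 2]) tendsto_id)
    obtain ⟨N₀, hN₀⟩ := eventually_atTop.1 hev
    refine ⟨max N₀ 0, fun n hn => ?_⟩
    have hN0 : (0:ℝ) ≤ max N₀ 0 := le_max_right _ _
    have hn0 : (0:ℝ) ≤ n := hN0.trans hn
    have h1 : ‖v n - v (max N₀ 0)‖ ^ 2 ≤ ψ (max N₀ 0) - ψ n := hvdiff _ n hN0 hn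
    have e1 : ψ (max N₀ 0) = g (max N₀ 0) := by
      simp only [hg]
      rw [max_eq_left hN0]
    have e2 : ψ n = g n := by
      simp only [hg]
      rw [max_eq_left hn0]
    have h2 : g (max N₀ 0) < L + ε ^ 2 / 2 := hN₀ _ (le_max_left _ _)
    have h3 : L ≤ g n := hLle n
    have h4 : ‖v n - v (max N₀ 0)‖ ^ 2 < ε ^ 2 := by
      rw [e1, e2] at h1
      nlinarith
    rw [dist_eq_norm]
    exact lt_of_pow_lt_pow_left₀ 2 εpos.le h4
  obtain ⟨p, hp⟩ := cauchySeq_tendsto_of_complete hvC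
  refine ⟨p, ?_, hp⟩
  rw [hSdef, mem_setOf_eq, hchar]
  intro q hq
  have htd : Tendsto (fun t => ⟪q.2, q.1 - v t⟫) atTop (𝓝 ⟪q.2, q.1 - p⟫) :=
    Filter.Tendsto.inner tendsto_const_nhds (tendsto_const_nhds.sub hp)
  refine ge_of_tendsto htd ?_
  filter_upwards [eventually_ge_atTop (0:ℝ)] with t ht
  exact (hchar (v t)).1 (hv t ht).1 q hq
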